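/- Suppose the M-grading of R = MvPolynomial (Fin N) ℂ is pointed and let I ⊆ R be an M-graded ideal. Then for every m ∈ M, the multi-graded Hilbert function of I equals the dimension of the degree-m Macaulay dual space: dim_ℂ(R_m) − dim_ℂ(R_m ∩ I) = dim_ℂ D_0^m(I), where R_m = weightedHomogeneousSubmodule w m, R_m ∩ I is the intersection of R_m with I viewed as a ℂ-subspace, and D_0^m(I) = {p ∈ R_m : λ_p(f) = 0 for all f ∈ I}. -/

import Mathlib

open MvPolynomial

/-- The Macaulay pairing `λ_p(f) = ∑_α coeff(α,p) * coeff(α,f)`, as a linear functional. -/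
noncomputable def lam {N : ℕ} (p : MvPolynomial (Fin N) ℂ) :
    MvPolynomial (Fin N) ℂ →ₗ[ℂ] ℂ where
  toFun f := ∑ α ∈ p.support, coeff α p * coeff α f
  map_add' f g := by simp [mul_add, Finset.sum_add_distrib]
  map_smul' c f := by
    simp [MvPolynomial.coeff_smul, Finset.mul_sum, mul_left_comm]

lemma lam_comm {N : ℕ} (p f : MvPolynomial (Fin N) ℂ) : lam p f = lam f p := by
  have h1 : (lam p) f = ∑ α ∈ p.support ∪ f.support, coeff α p * coeff α f := by
    show ∑ α ∈ p.support, coeff α p * coeff α f = _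
    exact Finset.sum_subset Finset.subset_union_left
      (fun α _ h => by simp [MvPolynomial.notMem_support_iff.mp h])
  have h2 : (lam f) p = ∑ α ∈ p.support ∪ f.support, coeff α f * coeff α p := by
    show ∑ α ∈ f.support, coeff α f * coeff α p = _
    exact Finset.sum_subset Finset.subset_union_right
      (fun α _ h => by simp [MvPolynomial.notMem_support_iff.mp h])
  rw [h1, h2]
  exact Finset.sum_congr rfl (fun α _ => mul_comm _ _)

/-- The subspace of polynomials `p` whose functional `λ_p` vanishes on the ideal `I`. -/
noncomputable def vanishSub {N : ℕ} (I : Ideal (MvPolynomial (Fin N) ℂ)) :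
    Submodule ℂ (MvPolynomial (Fin N) ℂ) where
  carrier := {p | ∀ f ∈ I, lam p f = 0}
  zero_mem' := by
    intro f _
    rw [lam_comm]
    exact map_zero (lam f)
  add_mem' := by
    intro a b ha hb f hf
    rw [lam_comm, map_add, ← lam_comm a f, ← lam_comm b f, ha f hf, hb f hf, add_zero]
  smul_mem' := by
    intro c a ha f hf
    rw [lam_comm, map_smul, ← lam_comm a f, ha f hf, smul_zero]

/-- An ideal is `M`-graded if it is generated by a set of `M`-homogeneous polynomials. -/
def IsMGraded {N : ℕ} {M : Type*} [AddCommGroup M] (w : Fin N → M)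
    (I : Ideal (MvPolynomial (Fin N) ℂ)) : Prop :=
  ∃ S : Set (MvPolynomial (Fin N) ℂ),
    (∀ s ∈ S, ∃ m : M, s.IsWeightedHomogeneous w m) ∧ I = Ideal.span S


lemma lam_apply {N : ℕ} (p f : MvPolynomial (Fin N) ℂ) :
    lam p f = ∑ α ∈ p.support, coeff α p * coeff α f := rfl

lemma lam_monomial_one {N : ℕ} (α : Fin N →₀ ℕ) (f : MvPolynomial (Fin N) ℂ) :
    lam (monomial α 1) f = coeff α f := by
  classical
  rw [lam_apply, support_monomial]
  simp [coeff_monomial]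

/-- The Macaulay pairing as a bilinear form on `R`. -/
noncomputable def macB {N : ℕ} : LinearMap.BilinForm ℂ (MvPolynomial (Fin N) ℂ) :=
  LinearMap.mk₂ ℂ (fun p f => lam p f)
    (fun p q f => by
      show lam (p + q) f = lam p f + lam q f
      rw [lam_comm, map_add, lam_comm f p, lam_comm f q])
    (fun c p f => by
      show lam (c • p) f = c • lam p f
      rw [lam_comm, map_smul, lam_comm f p])
    (fun p f g => map_add _ _ _)
    (fun c p f => map_smul _ _ _)

lemma macB_apply {N : ℕ} (p f : MvPolynomial (Fin N) ℂ) : macB p f = lam p f := rfl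

/-- For `p` weighted-homogeneous of degree `m`, `λ_p` only sees the degree-`m`
component of its argument. -/
lemma lam_weightedHomogeneousComponent {N : ℕ} {M : Type*} [AddCommGroup M]
    [DecidableEq M] {w : Fin N → M} {m : M} {p : MvPolynomial (Fin N) ℂ}
    (hp : p.IsWeightedHomogeneous w m) (f : MvPolynomial (Fin N) ℂ) :
    lam p f = lam p (weightedHomogeneousComponent w m f) := by
  rw [lam_apply, lam_apply]
  refine Finset.sum_congr rfl fun α hα => ?_
  rw [coeff_weightedHomogeneousComponent, if_pos (hp (mem_support_iff.mp hα))]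

/-- **Prop. 3.1**: for a pointed `M`-grading and an `M`-graded ideal `I`, the multi-graded
Hilbert function of `I` equals the dimension of the degree-`m` Macaulay dual space:
`dim R_m − dim (R_m ∩ I) = dim D_0^m(I)`. -/
theorem hilbertFunction_eq_finrank_dualSpace {N : ℕ} {M : Type*} [AddCommGroup M]
    (w : Fin N → M)
    (hpointed : ∀ m : M, {α : Fin N →₀ ℕ | Finsupp.weight w α = m}.Finite)
    (I : Ideal (MvPolynomial (Fin N) ℂ)) (hI : IsMGraded w I) (m : M) :
    Module.finrank ℂ ↥(weightedHomogeneousSubmodule ℂ w m)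
      - Module.finrank ℂ ↥(weightedHomogeneousSubmodule ℂ w m ⊓ I.restrictScalars ℂ)
      = Module.finrank ℂ ↥(weightedHomogeneousSubmodule ℂ w m ⊓ vanishSub I) := by
  classical
  set V : Submodule ℂ (MvPolynomial (Fin N) ℂ) := weightedHomogeneousSubmodule ℂ w m with hV
  -- V is finite dimensional
  have hfin : FiniteDimensional ℂ V := by
    haveI hspan : FiniteDimensional ℂ
        (Submodule.span ℂ ((fun α => (monomial α (1:ℂ))) '' {α | Finsupp.weight w α = m})) :=
      FiniteDimensional.span_of_finite ℂ ((hpointed m).image _)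
    have hle : V ≤
        Submodule.span ℂ ((fun α => (monomial α (1:ℂ))) '' {α | Finsupp.weight w α = m}) := by
      intro p hp
      rw [hV, mem_weightedHomogeneousSubmodule] at hp
      rw [← MvPolynomial.support_sum_monomial_coeff p]
      refine Submodule.sum_mem _ fun α hα => ?_
      have h1 : (monomial α (coeff α p)) = coeff α p • monomial α (1:ℂ) := by
        simp [smul_monomial]
      rw [h1]
      exact Submodule.smul_mem _ _
        (Submodule.subset_span ⟨α, hp (mem_support_iff.mp hα), rfl⟩)
    exact Submodule.finiteDimensional_of_le hle
  -- the restricted bilinear form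
  set B : LinearMap.BilinForm ℂ V := macB.restrict V with hB
  have hBapp : ∀ p f : V, B p f = lam (p : MvPolynomial (Fin N) ℂ) f := fun p f => rfl
  have hrefl : B.IsRefl := by
    intro x y h
    rw [hBapp] at h ⊢
    rw [lam_comm] at h
    exact h
  have hnd : B.Nondegenerate := by
    refine (LinearMap.IsRefl.nondegenerate_iff_separatingLeft hrefl).mpr ?_
    intro p hp
    have hph : (p : MvPolynomial (Fin N) ℂ).IsWeightedHomogeneous w m := p.2
    ext1
    rw [Submodule.coe_zero]
    ext α
    rw [coeff_zero]
    by_cases hα : Finsupp.weight w α = m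
    · have hmem : (monomial α (1:ℂ)) ∈ V :=
        isWeightedHomogeneous_monomial w α 1 hα
      have := hp ⟨monomial α 1, hmem⟩
      rw [hBapp, lam_comm, lam_monomial_one] at this
      exact this
    · by_contra hc
      exact hα (hph hc)
  -- ideal is homogeneous
  letI : GradedAlgebra (weightedHomogeneousSubmodule ℂ w) := weightedGradedAlgebra ℂ w
  have hIhom : I.IsHomogeneous (weightedHomogeneousSubmodule ℂ w) := by
    obtain ⟨S, hS, rfl⟩ := hI
    exact Ideal.homogeneous_span _ S fun s hs => by
      obtain ⟨n, hn⟩ := hS s hs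
      exact ⟨n, (mem_weightedHomogeneousSubmodule ℂ w n s).mpr hn⟩
  -- the two submodules of V
  set W : Submodule ℂ V := (I.restrictScalars ℂ).comap V.subtype with hW
  set D : Submodule ℂ V := (vanishSub I).comap V.subtype with hD
  -- D is the orthogonal of W
  have hDW : D = B.orthogonal W := by
    ext p
    constructor
    · intro hp
      replace hp : ∀ f ∈ I, lam (p : MvPolynomial (Fin N) ℂ) f = 0 := hp
      rw [LinearMap.BilinForm.mem_orthogonal_iff]
      intro f hf
      have : lam (p : MvPolynomial (Fin N) ℂ) f = 0 := hp (f : MvPolynomial (Fin N) ℂ) hf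
      rw [hBapp, lam_comm]
      exact this
    · intro hp
      show ∀ f ∈ I, lam (p : MvPolynomial (Fin N) ℂ) f = 0
      intro f hf
      have hcomp : (DirectSum.decompose (weightedHomogeneousSubmodule ℂ w) f m :
          MvPolynomial (Fin N) ℂ) ∈ I := hIhom m hf
      have hdec : (DirectSum.decompose (weightedHomogeneousSubmodule ℂ w) f m :
          MvPolynomial (Fin N) ℂ) = weightedHomogeneousComponent w m f :=
        MvPolynomial.decompose'_apply ℂ w f m
      rw [hdec] at hcomp
      have hVmem : weightedHomogeneousComponent w m f ∈ V :=
        weightedHomogeneousComponent_mem w f m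
      have hWmem : (⟨weightedHomogeneousComponent w m f, hVmem⟩ : V) ∈ W := hcomp
      have := hp _ hWmem
      rw [hBapp, lam_comm] at this
      rw [lam_weightedHomogeneousComponent p.2 f]
      exact this
  -- conclude with the rank-nullity for nondegenerate forms
  have key : Module.finrank ℂ D = Module.finrank ℂ V - Module.finrank ℂ W := by
    rw [hDW]
    exact LinearMap.BilinForm.finrank_orthogonal hnd W
  have hWrank : Module.finrank ℂ W
      = Module.finrank ℂ ↥(V ⊓ I.restrictScalars ℂ) := by
    rw [← Submodule.finrank_map_subtype_eq V W, hW, Submodule.map_comap_subtype]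
  have hDrank : Module.finrank ℂ D
      = Module.finrank ℂ ↥(V ⊓ vanishSub I) := by
    rw [← Submodule.finrank_map_subtype_eq V D, hD, Submodule.map_comap_subtype]
  rw [← hWrank, ← hDrank, key]
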